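/- With notation as in the definition of $E_\ell$ and $G_\ell$ for three bodies (center of mass at origin, $E_\ell = E_{jk} = m_j m_k (r_{jk}^{-(a+2)} - a\mu/M)$ where $(j,k,\ell)$ ranges over cyclic permutations of $(1,2,3)$, $G_\ell = g_\ell + a\mu m_\ell Q_\ell$): if additionally $\sum_\ell r_{jk}^2 E_\ell = 0$ (summing over cyclic permutations), then for each $\ell$, $|G_\ell|^2 = -(E_1 E_2 + E_2 E_3 + E_3 E_1)\, r_{jk}^2$, where $(j,k)$ is the pair complementary to $\ell$. -/

import Mathlib

theorem stmt_13 (Q₁ Q₂ Q₃ : ℂ) (m₁ m₂ m₃ a μ : ℝ)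
    (hm₁ : 0 < m₁) (hm₂ : 0 < m₂) (hm₃ : 0 < m₃) (ha : 0 < a)
    (hr₁₂ : Q₁ ≠ Q₂) (hr₂₃ : Q₂ ≠ Q₃) (hr₃₁ : Q₃ ≠ Q₁)
    (hcm : m₁ • Q₁ + m₂ • Q₂ + m₃ • Q₃ = 0)
    (M : ℝ) (hM : M = m₁ + m₂ + m₃)
    (E₁ E₂ E₃ : ℝ)
    (hE₁ : E₁ = m₂ * m₃ * (‖Q₂ - Q₃‖ ^ (-(a+2) : ℝ) - a * μ / M))
    (hE₂ : E₂ = m₃ * m₁ * (‖Q₃ - Q₁‖ ^ (-(a+2) : ℝ) - a * μ / M))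
    (hE₃ : E₃ = m₁ * m₂ * (‖Q₁ - Q₂‖ ^ (-(a+2) : ℝ) - a * μ / M))
    (G₁ G₂ G₃ : ℂ)
    (hG₁ : G₁ = E₃ • (Q₂ - Q₁) + E₂ • (Q₃ - Q₁))
    (hG₂ : G₂ = E₁ • (Q₃ - Q₂) + E₃ • (Q₁ - Q₂))
    (hG₃ : G₃ = E₂ • (Q₁ - Q₃) + E₁ • (Q₂ - Q₃))
    (hsum : ‖Q₂ - Q₃‖^2 * E₁ + ‖Q₃ - Q₁‖^2 * E₂ + ‖Q₁ - Q₂‖^2 * E₃ = 0) :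
    ‖G₁‖^2 = -(E₁*E₂ + E₂*E₃ + E₃*E₁) * ‖Q₂ - Q₃‖^2 ∧
    ‖G₂‖^2 = -(E₁*E₂ + E₂*E₃ + E₃*E₁) * ‖Q₃ - Q₁‖^2 ∧
    ‖G₃‖^2 = -(E₁*E₂ + E₂*E₃ + E₃*E₁) * ‖Q₁ - Q₂‖^2 := by
  have key : ∀ z : ℂ, ‖z‖ ^ 2 = z.re ^ 2 + z.im ^ 2 := fun z => by
    rw [Complex.sq_norm, Complex.normSq_apply]; ring
  subst hG₁ hG₂ hG₃
  simp only [key, Complex.add_re, Complex.add_im, Complex.sub_re, Complex.sub_im,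
    Complex.real_smul, Complex.mul_re, Complex.mul_im, Complex.ofReal_re,
    Complex.ofReal_im] at hsum ⊢
  refine ⟨by linear_combination (E₂ + E₃) * hsum, by linear_combination (E₃ + E₁) * hsum,
    by linear_combination (E₁ + E₂) * hsum⟩
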